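/- Let g(X) = X^3 + b₁X^2 + c₁X + d₁ ∈ ℤ[X] be irreducible with root ρ, K = ℚ(ρ), and suppose integers s, a, t satisfy: (i) disc(1,ρ,ρ²) = s^6 a^2 D_K where D_K is the discriminant of K; (ii) (1/2)g''(t) ≡ 0 (mod s), g'(t) ≡ 0 (mod s²a), and g(t) ≡ 0 (mod s³a²). Then φ := (ρ - t)/s and ψ := (ρ² + (t+b₁)ρ + t² + b₁t + c₁)/(s²a) are algebraic integers and {1, φ, ψ} is an integral basis of K. -/

import Mathlib

open Polynomial NumberField

theorem integral_basis_of_cubic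
    {K : Type*} [Field K] [NumberField K]
    (b₁ c₁ d₁ : ℤ) (g : ℤ[X]) (hg : g = X ^ 3 + C b₁ * X ^ 2 + C c₁ * X + C d₁)
    (hirr : Irreducible g) (ρ : K) (hρ : aeval ρ g = 0)
    (hgen : Algebra.adjoin ℚ {ρ} = ⊤)
    (s a t : ℤ)
    (hdisc : Algebra.discr ℚ ![1, ρ, ρ ^ 2] =
      ((s ^ 6 * a ^ 2 * NumberField.discr K : ℤ) : ℚ))
    (h2 : s ∣ (derivative (derivative g)).eval t / 2)
    (h1 : s ^ 2 * a ∣ (derivative g).eval t)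
    (h0 : s ^ 3 * a ^ 2 ∣ g.eval t)
    (φ ψ : K)
    (hφ : φ = (ρ - t) / s)
    (hψ : ψ = (ρ ^ 2 + ((t : K) + b₁) * ρ + t ^ 2 + b₁ * t + c₁) / (s ^ 2 * a)) :
    IsIntegral ℤ φ ∧ IsIntegral ℤ ψ ∧
      ∃ B : Module.Basis (Fin 3) ℤ (𝓞 K), (B 0 : K) = 1 ∧ (B 1 : K) = φ ∧ (B 2 : K) = ψ := by
  -- ## Basic facts about `g`
  have hmon : g.Monic := by rw [hg]; monicity!
  have hdeg : g.natDegree = 3 := by rw [hg]; compute_degree!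
  -- ## The divisibility hypotheses, in explicit form
  have h2' : s ∣ 3 * t + b₁ := by
    have : (derivative (derivative g)).eval t / 2 = 3 * t + b₁ := by
      simp [hg]; ring_nf
      omega
    rwa [this] at h2
  have h1' : s ^ 2 * a ∣ 3 * t ^ 2 + 2 * b₁ * t + c₁ := by
    have : (derivative g).eval t = 3 * t ^ 2 + 2 * b₁ * t + c₁ := by simp [hg]; ring
    rwa [this] at h1
  have h0' : s ^ 3 * a ^ 2 ∣ t ^ 3 + b₁ * t ^ 2 + c₁ * t + d₁ := by
    have : g.eval t = t ^ 3 + b₁ * t ^ 2 + c₁ * t + d₁ := by simp [hg]; try ring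
    rwa [this] at h0
  obtain ⟨e₂, he₂⟩ := h2'
  obtain ⟨f₁, hf₁⟩ := h1'
  obtain ⟨e₀, he₀⟩ := h0'
  -- ## Power basis generated by ρ
  have hint : IsIntegral ℚ ρ := IsIntegral.of_finite ℚ ρ
  have hρ' : aeval ρ (g.map (algebraMap ℤ ℚ)) = 0 := by
    rw [aeval_map_algebraMap ℚ]; exact hρ
  have hgQirr : Irreducible (g.map (algebraMap ℤ ℚ)) :=
    (hmon.irreducible_iff_irreducible_map_fraction_map (K := ℚ)).mp hirr
  have hminp : minpoly ℚ ρ = g.map (algebraMap ℤ ℚ) :=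
    (minpoly.eq_of_irreducible_of_monic hgQirr hρ' (hmon.map _)).symm
  have hmindeg : (minpoly ℚ ρ).natDegree = 3 := by
    rw [hminp, hmon.natDegree_map]; exact hdeg
  let pb0 := Algebra.adjoin.powerBasis hint
  let pb : PowerBasis ℚ K := pb0.map
    ((Subalgebra.equivOfEq _ _ hgen).trans Subalgebra.topEquiv)
  have hpbgen : pb.gen = ρ := rfl
  have hpbdim : pb.dim = 3 := by
    show pb0.dim = 3
    rw [Algebra.adjoin.powerBasis_dim]
    exact hmindeg
  have hfinrank : Module.finrank ℚ K = 3 := by rw [pb.finrank, hpbdim]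
  let bρ : Module.Basis (Fin 3) ℚ K := pb.basis.reindex (finCongr hpbdim)
  have hbρ : ⇑bρ = ![1, ρ, ρ ^ 2] := by
    funext i
    have hpow : ∀ j : Fin pb.dim, pb.basis j = ρ ^ (j : ℕ) := by
      intro j; rw [pb.basis_eq_pow, hpbgen]
    fin_cases i <;> simp [bρ, Module.Basis.reindex_apply, hpow]
  -- ## `s` and `a` are nonzero
  have hd0 : Algebra.discr ℚ ![1, ρ, ρ ^ 2] ≠ 0 := by
    rw [← hbρ]; exact Algebra.discr_not_zero_of_basis ℚ bρ
  have hsZ : s ≠ 0 := by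
    rintro rfl
    rw [hdisc] at hd0
    simp at hd0
  have haZ : a ≠ 0 := by
    rintro rfl
    rw [hdisc] at hd0
    simp at hd0
  have hs : (s : K) ≠ 0 := Int.cast_ne_zero.mpr hsZ
  have ha : (a : K) ≠ 0 := Int.cast_ne_zero.mpr haZ
  have hsQ : (s : ℚ) ≠ 0 := Int.cast_ne_zero.mpr hsZ
  have haQ : (a : ℚ) ≠ 0 := Int.cast_ne_zero.mpr haZ
  -- ## The cubic equation for `ρ` over `K`
  have hρK : ρ ^ 3 + (b₁ : K) * ρ ^ 2 + c₁ * ρ + d₁ = 0 := by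
    rw [hg] at hρ
    simpa using hρ
  -- ## Cast identities
  have he₂K : (3 : K) * t + b₁ = s * e₂ := by exact_mod_cast congrArg (Int.cast : ℤ → K) he₂
  have hf₁K : (3 : K) * t ^ 2 + 2 * b₁ * t + c₁ = s ^ 2 * a * f₁ := by
    exact_mod_cast congrArg (Int.cast : ℤ → K) hf₁
  have he₀K : (t : K) ^ 3 + b₁ * t ^ 2 + c₁ * t + d₁ = s ^ 3 * a ^ 2 * e₀ := by
    exact_mod_cast congrArg (Int.cast : ℤ → K) he₀
  have hφs : (s : K) * φ = ρ - t := by rw [hφ]; field_simp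
  have hψs : (s : K) ^ 2 * a * ψ = ρ ^ 2 + ((t : K) + b₁) * ρ + t ^ 2 + b₁ * t + c₁ := by
    rw [hψ]; field_simp
  -- ## Algebraic relations for φ and ψ
  have hB : φ ^ 3 + (e₂ : K) * φ ^ 2 + ((a : K) * f₁) * φ + ((a : K) ^ 2 * e₀) = 0 := by
    apply mul_left_cancel₀ (pow_ne_zero 3 hs)
    rw [mul_zero]
    linear_combination (((s:K)*φ)^2 + ((s:K)*φ)*(ρ-t) + (ρ-t)^2
        + (s:K)*e₂*((s:K)*φ + (ρ-t)) + (s:K)^2*a*f₁) * hφs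
      - (ρ-(t:K))^2 * he₂K - (ρ-(t:K)) * hf₁K - he₀K + hρK
  have hA : (a : K) * ψ = φ ^ 2 + (e₂ : K) * φ + (a : K) * f₁ := by
    apply mul_left_cancel₀ (pow_ne_zero 2 hs)
    linear_combination hψs - (((s:K)*φ) + (ρ-t) + (s:K)*e₂) * hφs + (ρ-(t:K)) * he₂K + hf₁K
  have hC : φ * ψ = -((a : K) * e₀) := by
    apply mul_left_cancel₀ ha
    linear_combination φ * hA + hB
  have hD : ψ ^ 2 = (f₁ : K) * ψ - (e₀ : K) * φ - (e₂ : K) * e₀ := by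
    apply mul_left_cancel₀ (pow_ne_zero 2 ha)
    linear_combination ((a:K)*ψ + φ^2 + (e₂:K)*φ) * hA + (φ + (e₂:K)) * hB
  have hE : ψ ^ 3 + (-f₁ : K) * ψ ^ 2 + ((e₂ : K) * e₀) * ψ + (-((a:K) * e₀ ^ 2)) = 0 := by
    linear_combination ψ * hD - (e₀ : K) * hC
  -- ## Integrality of φ and ψ
  have hφint : IsIntegral ℤ φ := by
    refine ⟨X ^ 3 + C e₂ * X ^ 2 + C (a * f₁) * X + C (a ^ 2 * e₀), by monicity!, ?_⟩
    rw [← aeval_def]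
    simp only [map_add, _root_.map_mul, map_pow, map_neg, aeval_X, aeval_C, eq_intCast, map_intCast]
    push_cast
    linear_combination hB
  have hψint : IsIntegral ℤ ψ := by
    refine ⟨X ^ 3 + C (-f₁) * X ^ 2 + C (e₂ * e₀) * X + C (-(a * e₀ ^ 2)), by monicity!, ?_⟩
    rw [← aeval_def]
    simp only [map_add, _root_.map_mul, map_pow, map_neg, aeval_X, aeval_C, eq_intCast, map_intCast]
    push_cast
    linear_combination hE
  refine ⟨hφint, hψint, ?_⟩
  set Φ : 𝓞 K := ⟨φ, hφint⟩ with hΦdef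
  set Ψ : 𝓞 K := ⟨ψ, hψint⟩ with hΨdef
  have hΦ : (Φ : K) = φ := rfl
  have hΨ : (Ψ : K) = ψ := rfl
  -- ## Discriminant of (1, φ, ψ)
  set Q : Matrix (Fin 3) (Fin 3) ℚ :=
    ![![1, 0, 0],
      ![-(t : ℚ) / s, 1 / s, 0],
      ![((t : ℚ) ^ 2 + b₁ * t + c₁) / (s ^ 2 * a), ((t : ℚ) + b₁) / (s ^ 2 * a),
        1 / (s ^ 2 * a)]] with hQ
  have hQdet : Q.det = 1 / (s ^ 3 * a) := by
    rw [Matrix.det_fin_three, hQ]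
    simp [Matrix.cons_val_zero, Matrix.cons_val_one]
    field_simp
  have hmv : Matrix.mulVec (Q.map (algebraMap ℚ K)) ![1, ρ, ρ ^ 2] = ![1, φ, ψ] := by
    funext i
    fin_cases i <;>
      simp [Matrix.mulVec, dotProduct, hQ, Matrix.map, Matrix.of_apply, hφ, hψ, Fin.sum_univ_three,
        div_eq_mul_inv] <;>
      field_simp <;> ring
  have hdiscφψ : Algebra.discr ℚ ![1, φ, ψ] = ((NumberField.discr K : ℤ) : ℚ) := by
    rw [← hmv, Algebra.discr_of_matrix_mulVec, hQdet, hdisc]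
    push_cast
    field_simp
  -- ## An integral basis reindexed by `Fin 3`
  have hcard : Fintype.card (Module.Free.ChooseBasisIndex ℤ (𝓞 K)) = 3 := by
    rw [← Module.finrank_eq_card_chooseBasisIndex, RingOfIntegers.rank, hfinrank]
  let e : Module.Free.ChooseBasisIndex ℤ (𝓞 K) ≃ Fin 3 :=
    Fintype.equivFinOfCardEq hcard
  let b : Module.Basis (Fin 3) ℤ (𝓞 K) := (RingOfIntegers.basis K).reindex e
  have hbK : Algebra.discr ℚ (fun i => (algebraMap (𝓞 K) K (b i))) =
      ((NumberField.discr K : ℤ) : ℚ) := by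
    have : (fun i => (algebraMap (𝓞 K) K (b i))) = ⇑(integralBasis K) ∘ ⇑e.symm := by
      funext i
      simp [b, integralBasis_apply]
    rw [this, Algebra.discr_reindex, coe_discr]
  set v : Fin 3 → 𝓞 K := ![1, Φ, Ψ] with hv
  set P : Matrix (Fin 3) (Fin 3) ℤ := b.toMatrix v with hP
  have hvK : (fun j => (algebraMap (𝓞 K) K (v j))) = ![1, φ, ψ] := by
    funext j
    fin_cases j <;> simp [hv, hΦ, hΨ] <;> rfl
  have hvm : Matrix.vecMul (fun i => (algebraMap (𝓞 K) K (b i)))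
      ((P.map (algebraMap ℤ ℚ)).map (algebraMap ℚ K)) = fun j => (algebraMap (𝓞 K) K (v j)) := by
    funext j
    have hsum := b.sum_toMatrix_smul_self v j
    calc (Matrix.vecMul (fun i => (algebraMap (𝓞 K) K (b i)))
          ((P.map (algebraMap ℤ ℚ)).map (algebraMap ℚ K))) j
        = ∑ i, (P i j : K) * (algebraMap (𝓞 K) K (b i)) := by
          simp [Matrix.vecMul, dotProduct, mul_comm]
      _ = algebraMap (𝓞 K) K (∑ i, P i j • b i) := by
          rw [map_sum]
          exact Finset.sum_congr rfl fun i _ => by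
            rw [zsmul_eq_mul, _root_.map_mul, map_intCast]
      _ = algebraMap (𝓞 K) K (v j) := by rw [hsum]
  have hPdet : ((P.det : ℚ)) ^ 2 = 1 := by
    have h1 : Algebra.discr ℚ (fun j => (algebraMap (𝓞 K) K (v j)))
        = (P.map (algebraMap ℤ ℚ)).det ^ 2 *
          Algebra.discr ℚ (fun i => (algebraMap (𝓞 K) K (b i))) := by
      rw [← hvm]
      exact Algebra.discr_of_matrix_vecMul _ _
    rw [hvK, hdiscφψ, hbK] at h1
    have hDne : ((NumberField.discr K : ℤ) : ℚ) ≠ 0 := by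
      exact_mod_cast NumberField.discr_ne_zero K
    have h2 : (P.map (algebraMap ℤ ℚ)).det ^ 2 = 1 :=
      mul_right_cancel₀ hDne (by rw [one_mul, ← h1])
    have h3 := (algebraMap ℤ ℚ).map_det P
    rw [RingHom.mapMatrix_apply] at h3
    rw [← h3] at h2
    rw [eq_intCast] at h2
    exact h2
  have hPunit : IsUnit P.det := by
    have hsq : P.det ^ 2 = 1 := by exact_mod_cast hPdet
    exact IsUnit.of_mul_eq_one P.det (by rw [← sq]; exact hsq)
  have hdet : IsUnit (b.det v) := by rwa [Module.Basis.det_apply]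
  obtain ⟨hli, hsp⟩ := (Module.Basis.is_basis_iff_det b).mpr hdet
  refine ⟨Module.Basis.mk hli hsp.ge, ?_, ?_, ?_⟩ <;>
    simp [Module.Basis.mk_apply, hv, hΦ, hΨ] <;> rfl
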